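/- Let {a_{n,N} : N ≥ 1, 0 ≤ n ≤ N} be a triangular array of complex numbers and f : [0,1] → ℂ a function such that for every t ∈ [0,1] and every sequence (n_N) with 0 ≤ n_N ≤ N and n_N/N → t, one has a_{n_N, N} → f(t). Then f is continuous on [0,1] and (1/N)·Σ_{n=0}^{N−1} a_{n,N} → ∫₀¹ f(t) dt as N → ∞. -/

import Mathlib

open Filter

/-- the default approximating sequence -/
noncomputable def cesaroSeq (t : ℝ) (N : ℕ) : ℕ := min N ⌊t * N⌋₊

lemma cesaroSeq_le (t : ℝ) (N : ℕ) : cesaroSeq t N ≤ N := min_le_left _ _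

lemma cesaroSeq_dist (t : ℝ) (ht0 : 0 ≤ t) (ht1 : t ≤ 1) {N : ℕ} (hN : 1 ≤ N) :
    |(cesaroSeq t N : ℝ) / N - t| ≤ 1 / N := by
  have hN0 : (0:ℝ) < N := by exact_mod_cast hN
  have hfl : ⌊t * N⌋₊ ≤ N := by
    calc ⌊t * N⌋₊ ≤ ⌊(N:ℝ)⌋₊ := Nat.floor_le_floor (by nlinarith)
    _ = N := Nat.floor_natCast N
  have hmin : cesaroSeq t N = ⌊t * N⌋₊ := min_eq_right hfl
  rw [hmin, abs_le]
  have h1 : (⌊t * N⌋₊ : ℝ) ≤ t * N := Nat.floor_le (by positivity)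
  have h2 : t * N < ⌊t * N⌋₊ + 1 := Nat.lt_floor_add_one _
  have h3 : (1 / (N:ℝ)) * N = 1 := by field_simp
  constructor
  · rw [div_sub' hN0.ne', le_div_iff₀ hN0]
    nlinarith
  · rw [div_sub' hN0.ne', div_le_iff₀ hN0]
    nlinarith

lemma cesaroSeq_tendsto (t : ℝ) (ht : t ∈ Set.Icc (0:ℝ) 1) :
    Tendsto (fun N : ℕ => (cesaroSeq t N : ℝ) / N) atTop (nhds t) := by
  rw [tendsto_iff_dist_tendsto_zero]
  apply squeeze_zero' (.of_forall fun N => dist_nonneg)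
    (g := fun N : ℕ => 1 / (N:ℝ))
  · filter_upwards [eventually_ge_atTop 1] with N hN
    rw [Real.dist_eq]
    exact cesaroSeq_dist t ht.1 ht.2 hN
  · exact tendsto_one_div_atTop_nhds_zero_nat

lemma cesaro_key (a : ℕ → ℕ → ℂ) (f : ℝ → ℂ)
    (h : ∀ t ∈ Set.Icc (0:ℝ) 1, ∀ n : ℕ → ℕ, (∀ N, n N ≤ N) →
      Tendsto (fun N => (n N : ℝ) / N) atTop (nhds t) →
      Tendsto (fun N => a (n N) N) atTop (nhds (f t)))
    (t : ℝ) (ht : t ∈ Set.Icc (0:ℝ) 1) (ε : ℝ) (hε : 0 < ε) :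
    ∃ δ > 0, ∃ N₀ : ℕ, ∀ N ≥ N₀, ∀ n ≤ N, |(n:ℝ)/N - t| < δ → ‖a n N - f t‖ < ε := by
  classical
  by_contra hc
  push_neg at hc
  have H : ∀ k M : ℕ, ∃ N, M < N ∧ ∃ n ≤ N,
      |(n:ℝ)/N - t| < 1/(k+1) ∧ ε ≤ ‖a n N - f t‖ := by
    intro k M
    obtain ⟨N, hN, hrest⟩ := hc (1/(k+1)) (by positivity) (M+1)
    exact ⟨N, hN, hrest⟩
  choose Nf hNf nf hnf1 hnf2 hnf3 using H
  set Nk : ℕ → ℕ := fun k => Nat.rec (Nf 0 0) (fun k ih => Nf (k+1) ih) k with hNk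
  have hmono : StrictMono Nk := strictMono_nat_of_lt_succ fun k => hNf (k+1) (Nk k)
  have hQ : ∀ k, ∃ n ≤ Nk k, |(n:ℝ)/(Nk k) - t| < 1/(k+1) ∧ ε ≤ ‖a n (Nk k) - f t‖ := by
    intro k
    cases k with
    | zero => exact ⟨nf 0 0, hnf1 0 0, hnf2 0 0, hnf3 0 0⟩
    | succ k => exact ⟨nf (k+1) (Nk k), hnf1 _ _, hnf2 _ _, hnf3 _ _⟩
  choose nk hnk1 hnk2 hnk3 using hQ
  set m : ℕ → ℕ := fun N => if hN : ∃ k, Nk k = N then nk hN.choose else cesaroSeq t N with hm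
  have hmk : ∀ k, m (Nk k) = nk k := by
    intro k
    have hx : ∃ j, Nk j = Nk k := ⟨k, rfl⟩
    simp only [hm, dif_pos hx]
    congr 1
    exact hmono.injective hx.choose_spec
  have hmle : ∀ N, m N ≤ N := by
    intro N
    by_cases hx : ∃ k, Nk k = N
    · simp only [hm, dif_pos hx]
      calc nk hx.choose ≤ Nk hx.choose := hnk1 _
      _ = N := hx.choose_spec
    · simp only [hm, dif_neg hx]; exact cesaroSeq_le t N
  have hml : Tendsto (fun N => (m N : ℝ)/N) atTop (nhds t) := by
    rw [Metric.tendsto_atTop]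
    intro δ hδ
    obtain ⟨K, hK⟩ := exists_nat_one_div_lt hδ
    obtain ⟨N₂, hN₂⟩ := Metric.tendsto_atTop.mp (cesaroSeq_tendsto t ht) δ hδ
    refine ⟨max (Nk K) N₂, fun N hN => ?_⟩
    by_cases hx : ∃ k, Nk k = N
    · obtain ⟨j, hj⟩ := hx
      subst hj
      rw [hmk j, Real.dist_eq]
      have hjK : K ≤ j := by
        by_contra hlt
        push_neg at hlt
        have h1 := hmono hlt
        have h2 := le_of_max_le_left hN
        omega
      have : (1:ℝ)/(j+1) ≤ 1/(K+1) := by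
        apply one_div_le_one_div_of_le (by positivity)
        exact_mod_cast Nat.succ_le_succ hjK
      calc |(nk j : ℝ)/(Nk j) - t| < 1/(j+1) := hnk2 j
      _ ≤ 1/(K+1) := this
      _ < δ := hK
    · simp only [hm, dif_neg hx]
      exact hN₂ N (le_trans (le_max_right _ _) hN)
  obtain ⟨N₁, hN₁⟩ := Metric.tendsto_atTop.mp (h t ht m hmle hml) ε hε
  have hlt : dist (a (m (Nk N₁)) (Nk N₁)) (f t) < ε := hN₁ _ hmono.le_apply
  rw [hmk, dist_eq_norm] at hlt
  exact absurd hlt (not_lt.mpr (hnk3 N₁))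

lemma cesaro_key2 (a : ℕ → ℕ → ℂ) (f : ℝ → ℂ)
    (h : ∀ t ∈ Set.Icc (0:ℝ) 1, ∀ n : ℕ → ℕ, (∀ N, n N ≤ N) →
      Tendsto (fun N => (n N : ℝ) / N) atTop (nhds t) →
      Tendsto (fun N => a (n N) N) atTop (nhds (f t)))
    (t : ℝ) (ht : t ∈ Set.Icc (0:ℝ) 1) (ε : ℝ) (hε : 0 < ε) :
    ∃ δ > 0, ∃ N₀ : ℕ,
      (∀ N ≥ N₀, ∀ n ≤ N, |(n:ℝ)/N - t| < δ → ‖a n N - f t‖ < ε) ∧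
      (∀ s ∈ Set.Icc (0:ℝ) 1, |s - t| < δ/2 → ‖f s - f t‖ ≤ ε) := by
  obtain ⟨δ, hδ, N₀, hN₀⟩ := cesaro_key a f h t ht ε hε
  refine ⟨δ, hδ, N₀, hN₀, fun s hs hst => ?_⟩
  have hseq := cesaroSeq_tendsto s hs
  have hlim : Tendsto (fun N => ‖a (cesaroSeq s N) N - f t‖) atTop (nhds ‖f s - f t‖) :=
    ((h s hs _ (cesaroSeq_le s) hseq).sub_const (f t)).norm
  apply le_of_tendsto hlim
  have hev : ∀ᶠ N : ℕ in atTop, |(cesaroSeq s N : ℝ)/N - s| < δ/2 := by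
    have := Metric.tendsto_atTop.mp hseq (δ/2) (by positivity)
    obtain ⟨N₂, hN₂⟩ := this
    filter_upwards [eventually_ge_atTop N₂] with N hN
    have := hN₂ N hN
    rwa [Real.dist_eq] at this
  filter_upwards [hev, eventually_ge_atTop N₀] with N h1 h2
  have : |(cesaroSeq s N : ℝ)/N - t| < δ := by
    calc |(cesaroSeq s N : ℝ)/N - t| ≤ |(cesaroSeq s N : ℝ)/N - s| + |s - t| := abs_sub_le _ _ _
    _ < δ/2 + δ/2 := by linarith
    _ = δ := by ring
  exact le_of_lt (hN₀ N h2 _ (cesaroSeq_le s N) this)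

lemma cesaro_cont (a : ℕ → ℕ → ℂ) (f : ℝ → ℂ)
    (h : ∀ t ∈ Set.Icc (0:ℝ) 1, ∀ n : ℕ → ℕ, (∀ N, n N ≤ N) →
      Tendsto (fun N => (n N : ℝ) / N) atTop (nhds t) →
      Tendsto (fun N => a (n N) N) atTop (nhds (f t))) :
    ContinuousOn f (Set.Icc 0 1) := by
  intro t ht
  rw [Metric.continuousWithinAt_iff]
  intro ε hε
  obtain ⟨δ, hδ, N₀, _, h2⟩ := cesaro_key2 a f h t ht (ε/2) (by positivity)
  refine ⟨δ/2, by positivity, fun s hs hst => ?_⟩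
  rw [Real.dist_eq] at hst
  have := h2 s hs hst
  rw [dist_eq_norm]
  linarith

lemma cesaro_unif (a : ℕ → ℕ → ℂ) (f : ℝ → ℂ)
    (h : ∀ t ∈ Set.Icc (0:ℝ) 1, ∀ n : ℕ → ℕ, (∀ N, n N ≤ N) →
      Tendsto (fun N => (n N : ℝ) / N) atTop (nhds t) →
      Tendsto (fun N => a (n N) N) atTop (nhds (f t)))
    (ε : ℝ) (hε : 0 < ε) :
    ∃ N₀ : ℕ, ∀ N ≥ N₀, ∀ n < N, ‖a n N - f ((n:ℝ)/N)‖ ≤ 2*ε := by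
  have hkey : ∀ t : Set.Icc (0:ℝ) 1, ∃ δ, 0 < δ ∧ ∃ N₀ : ℕ,
      (∀ N ≥ N₀, ∀ n ≤ N, |(n:ℝ)/N - (t:ℝ)| < δ → ‖a n N - f t‖ < ε) ∧
      (∀ s ∈ Set.Icc (0:ℝ) 1, |s - (t:ℝ)| < δ/2 → ‖f s - f t‖ ≤ ε) := by
    intro t
    obtain ⟨δ, hδ, N₀, h1, h2⟩ := cesaro_key2 a f h t t.2 ε hε
    exact ⟨δ, hδ, N₀, h1, h2⟩
  choose δ hδ N₀ hprop using hkey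
  obtain ⟨s, hs⟩ := isCompact_Icc.elim_finite_subcover
    (fun t : Set.Icc (0:ℝ) 1 => Metric.ball (t:ℝ) (δ t / 2))
    (fun t => Metric.isOpen_ball)
    (fun x hx => Set.mem_iUnion.mpr ⟨⟨x, hx⟩, by
      simpa using Metric.mem_ball_self (x := x) (half_pos (hδ ⟨x, hx⟩))⟩)
  refine ⟨max 1 (s.sup N₀), fun N hN n hn => ?_⟩
  have hN1 : 1 ≤ N := le_trans (le_max_left _ _) hN
  have hNpos : (0:ℝ) < N := by exact_mod_cast hN1
  have hx : (n:ℝ)/N ∈ Set.Icc (0:ℝ) 1 := by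
    constructor
    · positivity
    · rw [div_le_one hNpos]; exact_mod_cast hn.le
  obtain ⟨t, hts, hxt⟩ := Set.mem_iUnion₂.mp (hs hx)
  rw [Metric.mem_ball, Real.dist_eq] at hxt
  have hNt : N₀ t ≤ N := le_trans (Finset.le_sup hts) (le_trans (le_max_right _ _) hN)
  have h1 := (hprop t).1 N hNt n hn.le (lt_of_lt_of_le hxt (by linarith [(hδ t)]))
  have h2 := (hprop t).2 ((n:ℝ)/N) hx hxt
  calc ‖a n N - f ((n:ℝ)/N)‖
      = ‖(a n N - f (t:ℝ)) - (f ((n:ℝ)/N) - f (t:ℝ))‖ := by congr 1; ring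
  _ ≤ ‖a n N - f t‖ + ‖f ((n:ℝ)/N) - f t‖ := norm_sub_le _ _
  _ ≤ ε + ε := add_le_add h1.le h2
  _ = 2*ε := by ring

lemma riemann_sum_tendsto (g : ℝ → ℂ) (hg : ContinuousOn g (Set.Icc 0 1)) :
    Tendsto (fun N : ℕ => (N:ℂ)⁻¹ * ∑ n ∈ Finset.range N, g ((n:ℝ)/N)) atTop
      (nhds (∫ t in (0:ℝ)..1, g t)) := by
  have hu : UniformContinuousOn g (Set.Icc 0 1) :=
    isCompact_Icc.uniformContinuousOn_of_continuous hg
  rw [Metric.tendsto_atTop]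
  intro ε hε
  obtain ⟨δ, hδ, hδ'⟩ := Metric.uniformContinuousOn_iff.mp hu (ε/2) (by positivity)
  obtain ⟨N₃, hN₃⟩ := exists_nat_one_div_lt hδ
  refine ⟨max 1 (N₃+1), fun N hN => ?_⟩
  have hN1 : 1 ≤ N := le_trans (le_max_left _ _) hN
  have hNpos : (0:ℝ) < N := by exact_mod_cast hN1
  have hNδ : 1/(N:ℝ) < δ := by
    calc 1/(N:ℝ) ≤ 1/(N₃+1) := by
          apply one_div_le_one_div_of_le (by positivity)
          exact_mod_cast le_trans (le_max_right _ _) hN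
    _ < δ := hN₃
  -- subinterval containment
  have hsub : ∀ n < N, Set.uIcc ((n:ℝ)/N) ((n+1:ℕ)/N) ⊆ Set.Icc 0 1 := by
    intro n hn
    rw [Set.uIcc_of_le ((div_le_div_iff_of_pos_right hNpos).mpr (by exact_mod_cast Nat.le_succ n))]
    apply Set.Icc_subset_Icc
    · positivity
    · rw [div_le_one hNpos]; exact_mod_cast hn
  have hint : ∀ n < N, IntervalIntegrable g MeasureTheory.volume ((n:ℝ)/N) ((n+1:ℕ)/N) :=
    fun n hn => (hg.mono (hsub n hn)).intervalIntegrable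
  have hsum : ∑ n ∈ Finset.range N, ∫ t in ((n:ℝ)/N)..((n+1:ℕ)/N), g t
      = ∫ t in (0:ℝ)..1, g t := by
    have := intervalIntegral.sum_integral_adjacent_intervals
      (f := g) (μ := MeasureTheory.volume) (a := fun n : ℕ => (n:ℝ)/N) (n := N)
      (fun k hk => hint k hk)
    rw [this]
    norm_num
    rw [div_self hNpos.ne']
  -- termwise
  have hterm : ∀ n < N, ‖(N:ℂ)⁻¹ * g ((n:ℝ)/N) - ∫ t in ((n:ℝ)/N)..((n+1:ℕ)/N), g t‖
      ≤ ε/2 * (1/N) := by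
    intro n hn
    have hconst : (N:ℂ)⁻¹ * g ((n:ℝ)/N)
        = ∫ _ in ((n:ℝ)/N)..((n+1:ℕ)/N), g ((n:ℝ)/N) := by
      rw [intervalIntegral.integral_const]
      have : ((n+1:ℕ):ℝ)/N - (n:ℝ)/N = 1/N := by push_cast; field_simp; ring
      rw [this, Complex.real_smul]
      push_cast
      ring
    rw [hconst, ← intervalIntegral.integral_sub
      (intervalIntegrable_const) (hint n hn)]
    have hb : ∀ t ∈ Set.uIoc ((n:ℝ)/N) ((n+1:ℕ)/N), ‖g ((n:ℝ)/N) - g t‖ ≤ ε/2 := by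
      intro t htm
      have htI : t ∈ Set.Icc (0:ℝ) 1 := hsub n hn (Set.uIoc_subset_uIcc htm)
      have hnI : (n:ℝ)/N ∈ Set.Icc (0:ℝ) 1 := hsub n hn Set.left_mem_uIcc
      rw [Set.uIoc_of_le ((div_le_div_iff_of_pos_right hNpos).mpr (by exact_mod_cast Nat.le_succ n))] at htm
      have hdist : dist ((n:ℝ)/N) t < δ := by
        rw [Real.dist_eq, abs_sub_lt_iff]
        obtain ⟨h1, h2⟩ := htm
        push_cast at h2 ⊢
        constructor
        · linarith [(div_le_div_iff_of_pos_right hNpos).mpr (by linarith : (n:ℝ) ≤ (n:ℝ)+1), hNδ]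
        · have : ((n:ℝ)+1)/N - (n:ℝ)/N = 1/N := by field_simp; ring
          nlinarith
      have := hδ' _ hnI _ htI hdist
      rw [dist_eq_norm] at this
      exact this.le
    calc ‖∫ t in ((n:ℝ)/N)..((n+1:ℕ)/N), (g ((n:ℝ)/N) - g t)‖
        ≤ ε/2 * |((n+1:ℕ):ℝ)/N - (n:ℝ)/N| :=
          intervalIntegral.norm_integral_le_of_norm_le_const hb
    _ = ε/2 * (1/N) := by
          congr 1
          rw [abs_of_nonneg]
          · push_cast; field_simp; ring
          · rw [sub_nonneg]
            exact (div_le_div_iff_of_pos_right hNpos).mpr (by exact_mod_cast Nat.le_succ n)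
  -- combine
  rw [dist_eq_norm, ← hsum, Finset.mul_sum, ← Finset.sum_sub_distrib]
  calc ‖∑ n ∈ Finset.range N, ((N:ℂ)⁻¹ * g ((n:ℝ)/N) - ∫ t in ((n:ℝ)/N)..((n+1:ℕ)/N), g t)‖
      ≤ ∑ n ∈ Finset.range N, ‖(N:ℂ)⁻¹ * g ((n:ℝ)/N) - ∫ t in ((n:ℝ)/N)..((n+1:ℕ)/N), g t‖ :=
        norm_sum_le _ _
  _ ≤ ∑ _n ∈ Finset.range N, ε/2 * (1/N) :=
        Finset.sum_le_sum fun n hn => hterm n (Finset.mem_range.mp hn)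
  _ = ε/2 := by
        rw [Finset.sum_const, Finset.card_range, nsmul_eq_mul]
        field_simp
  _ < ε := by linarith

/-- Cesàro mean lemma for triangular arrays: if `a_{n_N,N} → f(t)` whenever `n_N/N → t`,
then `f` is continuous on `[0,1]` and `(1/N)·Σ_{n<N} a_{n,N} → ∫₀¹ f`. -/
theorem cesaro_triangular_array (a : ℕ → ℕ → ℂ) (f : ℝ → ℂ)
    (h : ∀ t ∈ Set.Icc (0:ℝ) 1, ∀ n : ℕ → ℕ, (∀ N, n N ≤ N) →
      Tendsto (fun N => (n N : ℝ) / N) atTop (nhds t) →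
      Tendsto (fun N => a (n N) N) atTop (nhds (f t))) :
    ContinuousOn f (Set.Icc 0 1) ∧
    Tendsto (fun N : ℕ => (N : ℂ)⁻¹ * ∑ n ∈ Finset.range N, a n N) atTop
      (nhds (∫ t in (0:ℝ)..1, f t)) := by
  have hcont := cesaro_cont a f h
  refine ⟨hcont, ?_⟩
  rw [Metric.tendsto_atTop]
  intro ε hε
  obtain ⟨N₀, hN₀⟩ := cesaro_unif a f h (ε/8) (by positivity)
  obtain ⟨N₄, hN₄⟩ := Metric.tendsto_atTop.mp (riemann_sum_tendsto f hcont) (ε/2) (by positivity)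
  refine ⟨max (max 1 N₀) N₄, fun N hN => ?_⟩
  have hN1 : 1 ≤ N := le_trans (le_trans (le_max_left _ _) (le_max_left _ _)) hN
  have hNpos : (0:ℝ) < N := by exact_mod_cast hN1
  have hd1 : dist ((N:ℂ)⁻¹ * ∑ n ∈ Finset.range N, a n N)
      ((N:ℂ)⁻¹ * ∑ n ∈ Finset.range N, f ((n:ℝ)/N)) ≤ ε/4 := by
    rw [dist_eq_norm, ← mul_sub, norm_mul, ← Finset.sum_sub_distrib]
    have hnorm : ‖(N:ℂ)⁻¹‖ = (N:ℝ)⁻¹ := by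
      rw [norm_inv, Complex.norm_natCast]
    rw [hnorm]
    calc (N:ℝ)⁻¹ * ‖∑ n ∈ Finset.range N, (a n N - f ((n:ℝ)/N))‖
        ≤ (N:ℝ)⁻¹ * ∑ n ∈ Finset.range N, ‖a n N - f ((n:ℝ)/N)‖ := by
          apply mul_le_mul_of_nonneg_left (norm_sum_le _ _) (by positivity)
    _ ≤ (N:ℝ)⁻¹ * ∑ _n ∈ Finset.range N, 2*(ε/8) := by
          apply mul_le_mul_of_nonneg_left _ (by positivity)
          exact Finset.sum_le_sum fun n hn => hN₀ N
            (le_trans (le_trans (le_max_right _ _) (le_max_left _ _)) hN) n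
            (Finset.mem_range.mp hn)
    _ = ε/4 := by
          rw [Finset.sum_const, Finset.card_range, nsmul_eq_mul]
          field_simp
          ring
  have hd2 : dist ((N:ℂ)⁻¹ * ∑ n ∈ Finset.range N, f ((n:ℝ)/N))
      (∫ t in (0:ℝ)..1, f t) < ε/2 := hN₄ N (le_trans (le_max_right _ _) hN)
  calc dist ((N:ℂ)⁻¹ * ∑ n ∈ Finset.range N, a n N) (∫ t in (0:ℝ)..1, f t)
      ≤ dist ((N:ℂ)⁻¹ * ∑ n ∈ Finset.range N, a n N)
          ((N:ℂ)⁻¹ * ∑ n ∈ Finset.range N, f ((n:ℝ)/N))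
        + dist ((N:ℂ)⁻¹ * ∑ n ∈ Finset.range N, f ((n:ℝ)/N)) (∫ t in (0:ℝ)..1, f t) :=
        dist_triangle _ _ _
  _ < ε/4 + ε/2 := by
        apply add_lt_add_of_le_of_lt hd1 hd2
  _ < ε := by linarith
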